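/- Let n be a positive integer, let u : [0,1] → ℝ be continuous, and let U(q) = ∫_0^q u(t) dt. Then ∫_0^1 ((1 − (1−t)^n)/t)·u(t) dt = U(1) + ∫_0^1 ((1 − (1−t)^n − n·t·(1−t)^{n−1})/t²)·U(t) dt. -/

import Mathlib

open Real intervalIntegral

lemma stmt_17_aux (t : ℝ) (m : ℕ) :
    t ^ 2 * ∑ k ∈ Finset.range (m + 1), (k : ℝ) * (1 - t) ^ (k - 1)
      = 1 - (1 - t) ^ (m + 1) - (m + 1) * t * (1 - t) ^ m := by
  induction m with
  | zero => simp
  | succ m ih =>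
    rw [Finset.sum_range_succ, mul_add, ih]
    push_cast
    try simp only [Nat.add_sub_cancel]
    ring

theorem stmt_17 (n : ℕ) (hn : 0 < n) (u : ℝ → ℝ)
    (hu : ContinuousOn u (Set.Icc (0:ℝ) 1))
    (U : ℝ → ℝ) (hU : ∀ q, U q = ∫ t in (0:ℝ)..q, u t) :
    ∫ t in (0:ℝ)..1, ((1 - (1 - t) ^ n) / t) * u t
      = U 1 + ∫ t in (0:ℝ)..1,
          ((1 - (1 - t) ^ n - n * t * (1 - t) ^ (n - 1)) / t ^ 2) * U t := by
  obtain ⟨m, rfl⟩ : ∃ m, n = m + 1 := ⟨n - 1, (Nat.succ_pred_eq_of_pos hn).symm⟩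
  set v : ℝ → ℝ := Set.IccExtend zero_le_one (fun x : Set.Icc (0:ℝ) 1 => u x) with hvdef
  have hvc : Continuous v :=
    Continuous.Icc_extend' (continuousOn_iff_continuous_restrict.mp hu)
  have hveq : ∀ x ∈ Set.Icc (0:ℝ) 1, v x = u x := fun x hx =>
    Set.IccExtend_of_mem _ _ hx
  set V : ℝ → ℝ := fun q => ∫ t in (0:ℝ)..q, v t with hVdef
  have hVU : ∀ q ∈ Set.Icc (0:ℝ) 1, V q = U q := by
    intro q hq
    rw [hU]
    refine intervalIntegral.integral_congr fun x hx => ?_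
    rw [Set.uIcc_of_le hq.1] at hx
    exact hveq x ⟨hx.1, hx.2.trans hq.2⟩
  set P : ℝ → ℝ := fun t => ∑ k ∈ Finset.range (m + 1), (1 - t) ^ k with hPdef
  set P' : ℝ → ℝ := fun t =>
    ∑ k ∈ Finset.range (m + 1), ((k : ℝ) * (1 - t) ^ (k - 1) * (-1)) with hP'def
  have hPd : ∀ t : ℝ, HasDerivAt P (P' t) t := by
    intro t
    exact HasDerivAt.fun_sum fun k _ => ((hasDerivAt_id t).const_sub 1).pow k
  have hP'c : Continuous P' := by
    rw [hP'def]
    exact continuous_finset_sum _ fun k _ => by continuity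
  have hVd : ∀ t : ℝ, HasDerivAt V (v t) t := fun t =>
    intervalIntegral.integral_hasDerivAt_right (hvc.intervalIntegrable 0 t)
      hvc.aestronglyMeasurable.stronglyMeasurableAtFilter hvc.continuousAt
  have key : ∫ t in (0:ℝ)..1, P t * v t
      = P 1 * V 1 - P 0 * V 0 - ∫ t in (0:ℝ)..1, P' t * V t :=
    intervalIntegral.integral_mul_deriv_eq_deriv_mul
      (fun x _ => hPd x) (fun x _ => hVd x)
      (hP'c.intervalIntegrable 0 1) (hvc.intervalIntegrable 0 1)
  have hP1 : P 1 = 1 := by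
    rw [hPdef]
    simp [Finset.sum_range_succ']
  have hV0 : V 0 = 0 := by simp [hVdef]
  have hV1 : V 1 = U 1 := hVU 1 ⟨zero_le_one, le_refl 1⟩
  have lhs_eq : ∫ t in (0:ℝ)..1, ((1 - (1 - t) ^ (m + 1)) / t) * u t
      = ∫ t in (0:ℝ)..1, P t * v t := by
    refine intervalIntegral.integral_congr_ae (MeasureTheory.ae_of_all _ fun t ht => ?_)
    rw [Set.uIoc_of_le zero_le_one] at ht
    have ht0 : t ≠ 0 := ne_of_gt ht.1
    rw [hveq t ⟨le_of_lt ht.1, ht.2⟩]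
    congr 1
    have hg := geom_sum_mul (1 - t) (m + 1)
    rw [div_eq_iff ht0, hPdef]
    linear_combination hg
  have rhs_eq : ∫ t in (0:ℝ)..1,
        ((1 - (1 - t) ^ (m + 1) - (m + 1 : ℕ) * t * (1 - t) ^ (m + 1 - 1)) / t ^ 2) * U t
      = ∫ t in (0:ℝ)..1, -(P' t * V t) := by
    refine intervalIntegral.integral_congr_ae (MeasureTheory.ae_of_all _ fun t ht => ?_)
    rw [Set.uIoc_of_le zero_le_one] at ht
    have ht0 : (t : ℝ) ^ 2 ≠ 0 := pow_ne_zero 2 (ne_of_gt ht.1)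
    rw [hVU t ⟨le_of_lt ht.1, ht.2⟩, ← neg_mul]
    congr 1
    rw [div_eq_iff ht0, hP'def]
    simp only [mul_neg_one, Finset.sum_neg_distrib, neg_neg]
    push_cast
    try simp only [Nat.add_sub_cancel]
    linear_combination -stmt_17_aux t m
  rw [lhs_eq, key, hP1, hV0, hV1, rhs_eq, intervalIntegral.integral_neg]
  ring
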